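/- Let d, m ≥ 1. Let N : Fin m → Matrix (Fin d) (Fin d) ℂ satisfy Σ_i N_iᴴ N_i = I, let M₀, M₁ be d×d complex matrices with M₀ᴴM₀ + M₁ᴴM₁ = I, and define ℰ(ρ) = Σ_i N_i (M₁ ρ M₁ᴴ) N_iᴴ. Let A be any positive semidefinite d×d complex matrix. Then there exists a positive semidefinite d×d complex matrix B such that for every positive semidefinite d×d complex matrix ρ satisfying Σ_{k=0}^∞ tr(M₀ ℰ^k(ρ) M₀ᴴ) = tr(ρ), both families k ↦ tr(ℰ^k(ρ)) and k ↦ tr(A · M₁ ℰ^k(ρ) M₁ᴴ) are summable and Σ_{k=0}^∞ tr(ℰ^k(ρ)) + Σ_{k=0}^∞ tr(A · M₁ ℰ^k(ρ) M₁ᴴ) = tr(B ρ). -/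

import Mathlib

open Matrix Filter
open scoped ComplexOrder

/-- The super-operator `ℰ(ρ) = Σ_i N_i (M₁ ρ M₁ᴴ) N_iᴴ` of one loop iteration. -/
noncomputable def loopStep {d m : ℕ} (N : Fin m → Matrix (Fin d) (Fin d) ℂ)
    (M₁ : Matrix (Fin d) (Fin d) ℂ) (σ : Matrix (Fin d) (Fin d) ℂ) :
    Matrix (Fin d) (Fin d) ℂ :=
  ∑ i, N i * (M₁ * σ * M₁ᴴ) * (N i)ᴴ

namespace QRT

attribute [local instance] Matrix.normedAddCommGroup Matrix.normedSpace

variable {d m : ℕ}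

local notation "Mat" => Matrix (Fin d) (Fin d) ℂ

lemma real_smul_eq (r : ℝ) (X : Mat) : r • X = (r : ℂ) • X := by
  ext i j; simp [Matrix.smul_apply, Complex.real_smul]

lemma psd_sum {ι : Type*} (s : Finset ι) (f : ι → Mat)
    (h : ∀ i ∈ s, (f i).PosSemidef) : (∑ i ∈ s, f i).PosSemidef := by
  classical
  induction s using Finset.induction_on with
  | empty => simpa using Matrix.PosSemidef.zero
  | @insert a s' hx ih =>
      rw [Finset.sum_insert hx]
      exact (h a (Finset.mem_insert_self a s')).add
        (ih fun i hi => h i (Finset.mem_insert_of_mem hi))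

lemma psd_smul {c : ℝ} (hc : 0 ≤ c) {X : Mat} (hX : X.PosSemidef) :
    (c • X).PosSemidef := by
  rw [real_smul_eq]
  refine Matrix.PosSemidef.of_dotProduct_mulVec_nonneg ?_ fun x => ?_
  · unfold Matrix.IsHermitian
    rw [Matrix.conjTranspose_smul, hX.1.eq]
    congr 1
    simp [Complex.ext_iff, Complex.conj_re, Complex.conj_im]
  · rw [Matrix.smul_mulVec, dotProduct_smul, smul_eq_mul]
    exact mul_nonneg (by exact_mod_cast hc) (hX.dotProduct_mulVec_nonneg x)

lemma psd_diag_re_nonneg {X : Mat} (hX : X.PosSemidef) (i : Fin d) : 0 ≤ (X i i).re := by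
  have := hX.re_dotProduct_nonneg (Pi.single i 1)
  simpa [dotProduct, Matrix.mulVec, Pi.single_apply] using this

lemma psd_trace_re_nonneg {X : Mat} (hX : X.PosSemidef) : 0 ≤ X.trace.re := by
  simpa [Matrix.trace, Complex.re_sum, Matrix.diag] using
    Finset.sum_nonneg fun i _ => psd_diag_re_nonneg hX i

lemma psd_entry_norm_le_trace {X : Mat} (hX : X.PosSemidef) (i j : Fin d) :
    ‖X i j‖ ≤ X.trace.re := by
  obtain ⟨B, rfl⟩ : ∃ B : Mat, X = Bᴴ * B := by
    open scoped MatrixOrder in exact CStarAlgebra.nonneg_iff_eq_star_mul_self.mp hX.nonneg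
  have hdiag : ∀ l : Fin d, ((Bᴴ * B) l l).re = ∑ k, ‖B k l‖ ^ 2 := by
    intro l
    rw [Matrix.mul_apply, Complex.re_sum]
    refine Finset.sum_congr rfl fun k _ => ?_
    simp [Matrix.conjTranspose_apply, Complex.mul_re, Complex.sq_norm,
      Complex.normSq_apply]
  have htr : (Bᴴ * B).trace.re = ∑ l, ∑ k, ‖B k l‖ ^ 2 := by
    rw [Matrix.trace, Complex.re_sum]
    exact Finset.sum_congr rfl fun l _ => hdiag l
  have hle : ‖(Bᴴ * B) i j‖ ≤ ∑ k, ‖B k i‖ * ‖B k j‖ := by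
    rw [Matrix.mul_apply]
    refine (norm_sum_le _ _).trans (le_of_eq ?_)
    congr 1; ext k
    simp [Matrix.conjTranspose_apply]
  refine hle.trans ?_
  have hstep : ∀ k, ‖B k i‖ * ‖B k j‖ ≤ (‖B k i‖ ^ 2 + ‖B k j‖ ^ 2) / 2 := by
    intro k
    nlinarith [sq_nonneg (‖B k i‖ - ‖B k j‖)]
  refine (Finset.sum_le_sum fun k _ => hstep k).trans ?_
  rw [htr]
  have h1 : ∑ k, ‖B k i‖ ^ 2 ≤ ∑ l, ∑ k, ‖B k l‖ ^ 2 :=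
    Finset.single_le_sum (f := fun l => ∑ k, ‖B k l‖ ^ 2)
      (fun l _ => Finset.sum_nonneg fun k _ => sq_nonneg _) (Finset.mem_univ i)
  have h2 : ∑ k, ‖B k j‖ ^ 2 ≤ ∑ l, ∑ k, ‖B k l‖ ^ 2 :=
    Finset.single_le_sum (f := fun l => ∑ k, ‖B k l‖ ^ 2)
      (fun l _ => Finset.sum_nonneg fun k _ => sq_nonneg _) (Finset.mem_univ j)
  have h3 : ∑ k, (‖B k i‖ ^ 2 + ‖B k j‖ ^ 2) / 2
      = ((∑ k, ‖B k i‖ ^ 2) + ∑ k, ‖B k j‖ ^ 2) / 2 := by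
    rw [← Finset.sum_div, Finset.sum_add_distrib]
  rw [h3]; linarith

lemma psd_norm_le_trace {X : Mat} (hX : X.PosSemidef) : ‖X‖ ≤ X.trace.re := by
  rcases Nat.eq_zero_or_pos d with h | h
  · subst h
    simp [Matrix.trace]
    have : X = 0 := by ext i j; exact absurd i.2 (by omega)
    simp [this]
  · refine (Matrix.norm_le_iff ?_).mpr fun i j => psd_entry_norm_le_trace hX i j
    exact psd_diag_re_nonneg hX ⟨0, h⟩ |>.trans (by
      simpa [Matrix.trace, Complex.re_sum, Matrix.diag] using
        Finset.single_le_sum (f := fun l => (X l l).re)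
          (fun l _ => psd_diag_re_nonneg hX l) (Finset.mem_univ (⟨0,h⟩ : Fin d)))

lemma trace_mul_psd_nonneg {X Y : Mat} (hX : X.PosSemidef) (hY : Y.PosSemidef) :
    0 ≤ (X * Y).trace.re := by
  obtain ⟨B, rfl⟩ : ∃ B : Mat, X = Bᴴ * B := by
    open scoped MatrixOrder in exact CStarAlgebra.nonneg_iff_eq_star_mul_self.mp hX.nonneg
  have : (Bᴴ * B * Y).trace = (B * Y * Bᴴ).trace := by
    rw [Matrix.mul_assoc, Matrix.trace_mul_comm]
  rw [this]
  exact psd_trace_re_nonneg (hY.mul_mul_conjTranspose_same B)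

lemma trace_mul_re_le {G X : Mat} (hX : X.PosSemidef) :
    ((G * X).trace).re ≤ (∑ i, ∑ j, ‖G i j‖) * X.trace.re := by
  have h1 : ‖(G * X).trace‖ ≤ ∑ i, ∑ j, ‖G i j‖ * ‖X j i‖ := by
    rw [Matrix.trace]
    refine (norm_sum_le _ _).trans ?_
    refine Finset.sum_le_sum fun i _ => ?_
    simpa [Matrix.mul_apply, Matrix.diag] using
      (norm_sum_le Finset.univ (fun j => G i j * X j i)).trans
        (Finset.sum_le_sum fun j _ => le_of_eq (norm_mul _ _))
  have h2 : ∑ i, ∑ j, ‖G i j‖ * ‖X j i‖ ≤ ∑ i, ∑ j, ‖G i j‖ * X.trace.re := by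
    refine Finset.sum_le_sum fun i _ => Finset.sum_le_sum fun j _ => ?_
    exact mul_le_mul_of_nonneg_left (psd_entry_norm_le_trace hX j i) (norm_nonneg _)
  calc ((G * X).trace).re ≤ ‖(G * X).trace‖ := Complex.re_le_norm _
    _ ≤ ∑ i, ∑ j, ‖G i j‖ * X.trace.re := h1.trans h2
    _ = (∑ i, ∑ j, ‖G i j‖) * X.trace.re := by simp [Finset.sum_mul]

lemma psd_vecMulVec (x : Fin d → ℂ) : (Matrix.vecMulVec x (star x)).PosSemidef := by
  refine Matrix.PosSemidef.of_dotProduct_mulVec_nonneg ?_ fun y => ?_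
  · ext i j
    simp [Matrix.vecMulVec_apply, Matrix.conjTranspose_apply, mul_comm]
  · have hmv : (Matrix.vecMulVec x (star x)) *ᵥ y = (star x ⬝ᵥ y) • x := by
      ext i
      simp [Matrix.mulVec, Matrix.vecMulVec_apply, dotProduct, Finset.mul_sum, mul_comm,
        mul_left_comm]
    rw [hmv, dotProduct_smul, smul_eq_mul]
    have : star y ⬝ᵥ x = star (star x ⬝ᵥ y) := by
      simp [dotProduct, mul_comm]
    rw [this]
    exact mul_star_self_nonneg _

lemma dotProduct_eq_trace (B : Mat) (x : Fin d → ℂ) :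
    star x ⬝ᵥ B *ᵥ x = (B * Matrix.vecMulVec x (star x)).trace := by
  simp [Matrix.trace, Matrix.mul_apply, Matrix.vecMulVec_apply, dotProduct,
    Matrix.mulVec, Matrix.diag, Finset.mul_sum]
  refine Finset.sum_congr rfl fun i _ => Finset.sum_congr rfl fun j _ => by ring

section Sandwich

lemma sandwich_mul {U : Mat} (hU1 : star U * U = 1) (v w : Fin d → ℂ) :
    (U * Matrix.diagonal v * star U) * (U * Matrix.diagonal w * star U)
      = U * Matrix.diagonal (fun i => v i * w i) * star U := by
  calc (U * Matrix.diagonal v * star U) * (U * Matrix.diagonal w * star U)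
      = U * Matrix.diagonal v * (star U * U) * (Matrix.diagonal w * star U) := by
        simp only [Matrix.mul_assoc]
    _ = U * (Matrix.diagonal v * Matrix.diagonal w) * star U := by
        rw [hU1, Matrix.mul_one]; simp only [Matrix.mul_assoc]
    _ = U * Matrix.diagonal (fun i => v i * w i) * star U := by
        rw [Matrix.diagonal_mul_diagonal]

lemma sandwich_psd (U : Mat) (v : Fin d → ℂ) (hv : ∀ i, 0 ≤ v i) :
    (U * Matrix.diagonal v * star U).PosSemidef := by
  have : (Matrix.diagonal v).PosSemidef := Matrix.posSemidef_diagonal_iff.mpr hv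
  simpa [Matrix.star_eq_conjTranspose] using this.mul_mul_conjTranspose_same U

lemma sandwich_herm (U : Mat) (v : Fin d → ℂ) (hv : ∀ i, star (v i) = v i) :
    (U * Matrix.diagonal v * star U)ᴴ = U * Matrix.diagonal v * star U := by
  rw [Matrix.conjTranspose_mul, Matrix.conjTranspose_mul, Matrix.diagonal_conjTranspose]
  have h : star v = v := funext hv
  rw [h, Matrix.star_eq_conjTranspose, Matrix.conjTranspose_conjTranspose, Matrix.mul_assoc]

/-- support projection of a PSD matrix, with a positive lower bound on its support. -/
lemma exists_support_proj (hd : 1 ≤ d) {R : Mat} (hR : R.PosSemidef) :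
    ∃ (Q : Mat) (lam : ℝ), Q.PosSemidef ∧ Qᴴ = Q ∧ Q * Q = Q ∧ Q * R = R ∧ R * Q = R ∧
      0 < lam ∧ (R - (lam : ℂ) • Q).PosSemidef := by
  haveI : Nonempty (Fin d) := ⟨⟨0, hd⟩⟩
  have hH : R.IsHermitian := hR.1
  obtain ⟨U, hU1, ev, hev, hRspec⟩ :
      ∃ U : Mat, star U * U = 1 ∧ ∃ ev : Fin d → ℝ, (∀ i, 0 ≤ ev i) ∧
        R = U * Matrix.diagonal (fun i => (ev i : ℂ)) * star U := by
    refine ⟨(hH.eigenvectorUnitary : Mat), Matrix.mem_unitaryGroup_iff'.mp hH.eigenvectorUnitary.2,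
      hH.eigenvalues, hR.eigenvalues_nonneg, ?_⟩
    simpa [Function.comp_def] using hH.spectral_theorem
  classical
  set χ : Fin d → ℂ := fun i => if ev i = 0 then 0 else 1 with hχ
  set lam : ℝ := Finset.univ.inf' Finset.univ_nonempty (fun i => if ev i = 0 then 1 else ev i)
    with hlam
  have hlam_pos : 0 < lam := by
    rw [hlam, Finset.lt_inf'_iff]
    intro i _
    by_cases h : ev i = 0
    · simp [h]
    · simp only [h, if_false]
      exact lt_of_le_of_ne (hev i) (Ne.symm h)
  refine ⟨U * Matrix.diagonal χ * star U, lam, ?_, ?_, ?_, ?_, ?_, hlam_pos, ?_⟩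
  · refine sandwich_psd U χ fun i => ?_
    by_cases h : ev i = 0 <;> simp [hχ, h]
  · refine sandwich_herm U χ fun i => ?_
    by_cases h : ev i = 0 <;> simp [hχ, h]
  · rw [sandwich_mul hU1]
    have : (fun i => χ i * χ i) = χ := by
      funext i; by_cases h : ev i = 0 <;> simp [hχ, h]
    rw [this]
  · rw [hRspec, sandwich_mul hU1]
    have : (fun i => χ i * (ev i : ℂ)) = fun i => (ev i : ℂ) := by
      funext i; by_cases h : ev i = 0 <;> simp [hχ, h]
    rw [this]
  · rw [hRspec, sandwich_mul hU1]
    have : (fun i => (ev i : ℂ) * χ i) = fun i => (ev i : ℂ) := by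
      funext i; by_cases h : ev i = 0 <;> simp [hχ, h]
    rw [this]
  · have hd1 : Matrix.diagonal (fun i => (lam : ℂ) * χ i) = (lam : ℂ) • Matrix.diagonal χ := by
      rw [show (fun i => (lam:ℂ) * χ i) = (lam:ℂ) • χ from rfl, Matrix.diagonal_smul]
    have hsm : (lam : ℂ) • (U * Matrix.diagonal χ * star U)
        = U * Matrix.diagonal (fun i => (lam : ℂ) * χ i) * star U := by
      rw [hd1, Matrix.mul_smul, Matrix.smul_mul]
    have hsub : R - (lam : ℂ) • (U * Matrix.diagonal χ * star U)
        = U * Matrix.diagonal (fun i => (ev i : ℂ) - (lam : ℂ) * χ i) * star U := by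
      rw [hRspec, hsm, ← Matrix.sub_mul, ← Matrix.mul_sub, ← Matrix.diagonal_sub]
    rw [hsub]
    refine sandwich_psd U _ fun i => ?_
    by_cases h : ev i = 0
    · simp [hχ, h]
    · have hle : lam ≤ ev i := by
        refine (Finset.inf'_le _ (Finset.mem_univ i)).trans ?_
        simp [h]
      simp only [hχ, h, if_false, mul_one]
      rw [← Complex.ofReal_sub]
      exact_mod_cast sub_nonneg.mpr hle

end Sandwich

section Channel

variable (N : Fin m → Matrix (Fin d) (Fin d) ℂ) (M₀ M₁ : Matrix (Fin d) (Fin d) ℂ)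

/-- dual (Heisenberg picture) of one loop-step. -/
noncomputable def dualStep (X : Mat) : Mat := M₁ᴴ * (∑ i, (N i)ᴴ * X * N i) * M₁

lemma loopStep_add (σ τ : Mat) :
    loopStep N M₁ (σ + τ) = loopStep N M₁ σ + loopStep N M₁ τ := by
  simp [loopStep, Matrix.mul_add, Matrix.add_mul, Finset.sum_add_distrib]

lemma loopStep_sub (σ τ : Mat) :
    loopStep N M₁ (σ - τ) = loopStep N M₁ σ - loopStep N M₁ τ := by
  simp [loopStep, Matrix.mul_sub, Matrix.sub_mul, Finset.sum_sub_distrib]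

lemma loopStep_realsmul (c : ℝ) (σ : Mat) :
    loopStep N M₁ (c • σ) = c • loopStep N M₁ σ := by
  simp [loopStep, Matrix.mul_smul, Matrix.smul_mul, Finset.smul_sum]

lemma loopStep_psd {σ : Mat} (hσ : σ.PosSemidef) : (loopStep N M₁ σ).PosSemidef := by
  refine psd_sum _ _ fun i _ => ?_
  exact (hσ.mul_mul_conjTranspose_same M₁).mul_mul_conjTranspose_same (N i)

lemma iter_psd {σ : Mat} (hσ : σ.PosSemidef) (k : ℕ) :
    ((loopStep N M₁)^[k] σ).PosSemidef := by
  induction k with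
  | zero => simpa using hσ
  | succ n ih => rw [Function.iterate_succ_apply']; exact loopStep_psd N M₁ ih

lemma iter_sub (σ τ : Mat) (k : ℕ) :
    (loopStep N M₁)^[k] (σ - τ) = (loopStep N M₁)^[k] σ - (loopStep N M₁)^[k] τ := by
  induction k with
  | zero => simp
  | succ n ih => simp only [Function.iterate_succ_apply', ih, loopStep_sub]

lemma iter_realsmul (c : ℝ) (σ : Mat) (k : ℕ) :
    (loopStep N M₁)^[k] (c • σ) = c • (loopStep N M₁)^[k] σ := by
  induction k with
  | zero => simp
  | succ n ih => simp only [Function.iterate_succ_apply', ih, loopStep_realsmul]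

/-- monotonicity of the iterated channel. -/
lemma iter_mono {σ τ : Mat} (h : (τ - σ).PosSemidef) (k : ℕ) :
    ((loopStep N M₁)^[k] τ - (loopStep N M₁)^[k] σ).PosSemidef := by
  rw [← iter_sub]
  induction k with
  | zero => simpa using h
  | succ n ih => rw [Function.iterate_succ_apply']; exact loopStep_psd N M₁ ih

lemma trace_loopStep (hN : ∑ i, (N i)ᴴ * N i = 1) (σ : Mat) :
    (loopStep N M₁ σ).trace = (M₁ * σ * M₁ᴴ).trace := by
  rw [loopStep, Matrix.trace_sum]
  have : ∀ i, (N i * (M₁ * σ * M₁ᴴ) * (N i)ᴴ).trace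
      = ((N i)ᴴ * N i * (M₁ * σ * M₁ᴴ)).trace := by
    intro i
    rw [Matrix.trace_mul_cycle]
  rw [Finset.sum_congr rfl fun i _ => this i, ← Matrix.trace_sum]
  have : ∑ i, (N i)ᴴ * N i * (M₁ * σ * M₁ᴴ) = (∑ i, (N i)ᴴ * N i) * (M₁ * σ * M₁ᴴ) := by
    rw [Finset.sum_mul]
  rw [this, hN, Matrix.one_mul]

lemma trace_split (hM : M₀ᴴ * M₀ + M₁ᴴ * M₁ = 1) (σ : Mat) :
    (M₀ * σ * M₀ᴴ).trace + (M₁ * σ * M₁ᴴ).trace = σ.trace := by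
  rw [Matrix.trace_mul_cycle (A := M₀), Matrix.trace_mul_cycle (A := M₁),
    ← Matrix.trace_add]
  rw [← Matrix.add_mul, hM, Matrix.one_mul]

lemma dualStep_psd {X : Mat} (hX : X.PosSemidef) : (dualStep N M₁ X).PosSemidef := by
  refine Matrix.PosSemidef.conjTranspose_mul_mul_same ?_ M₁
  exact psd_sum _ _ fun i _ => hX.conjTranspose_mul_mul_same (N i)

lemma dualStep_trace (X σ : Mat) :
    (dualStep N M₁ X * σ).trace = (X * loopStep N M₁ σ).trace := by
  have key : ∀ S Z : Mat, (M₁ᴴ * S * M₁ * Z).trace = (S * (M₁ * Z * M₁ᴴ)).trace := by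
    intro S Z
    rw [Matrix.mul_assoc (M₁ᴴ * S), Matrix.trace_mul_comm, ← Matrix.mul_assoc,
      Matrix.trace_mul_comm (M₁ * Z * M₁ᴴ) S]
  rw [dualStep, key, loopStep, Matrix.mul_sum, Matrix.trace_sum, Finset.sum_mul,
    Matrix.trace_sum]
  refine Finset.sum_congr rfl fun i _ => ?_
  rw [Matrix.mul_assoc ((N i)ᴴ * X), Matrix.trace_mul_comm, ← Matrix.mul_assoc,
    Matrix.trace_mul_comm (N i * (M₁ * σ * M₁ᴴ) * (N i)ᴴ) X, Matrix.mul_assoc (N i)]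

lemma dual_iter_trace (X σ : Mat) (k : ℕ) :
    ((dualStep N M₁)^[k] X * σ).trace = (X * (loopStep N M₁)^[k] σ).trace := by
  induction k generalizing σ with
  | zero => simp
  | succ n ih =>
      rw [Function.iterate_succ_apply' (dualStep N M₁),
        Function.iterate_succ_apply (loopStep N M₁), dualStep_trace, ih]

lemma dual_iter_psd {X : Mat} (hX : X.PosSemidef) (k : ℕ) :
    ((dualStep N M₁)^[k] X).PosSemidef := by
  induction k with
  | zero => simpa using hX
  | succ n ih => rw [Function.iterate_succ_apply']; exact dualStep_psd N M₁ ih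

end Channel

section Terminating

variable (N : Fin m → Matrix (Fin d) (Fin d) ℂ) (M₀ M₁ : Matrix (Fin d) (Fin d) ℂ)

/-- The set of almost-surely terminating (normalised-trace-vanishing) PSD inputs. -/
def Tset : Set Mat :=
  {ρ | ρ.PosSemidef ∧ Tendsto (fun k => (((loopStep N M₁)^[k] ρ).trace).re) atTop (nhds 0)}

lemma trace_realsmul_re (c : ℝ) (X : Mat) : ((c • X).trace).re = c * X.trace.re := by
  rw [Matrix.trace_smul]
  exact Complex.smul_re c X.trace

lemma Tset_zero : (0 : Mat) ∈ Tset N M₁ := by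
  have h0 : loopStep N M₁ (0 : Mat) = 0 := by simp [loopStep]
  refine ⟨Matrix.PosSemidef.zero, ?_⟩
  have : ∀ k, (loopStep N M₁)^[k] (0 : Mat) = 0 := fun k => Function.iterate_fixed h0 k
  simpa [this] using tendsto_const_nhds

lemma iter_add (σ τ : Mat) (k : ℕ) :
    (loopStep N M₁)^[k] (σ + τ) = (loopStep N M₁)^[k] σ + (loopStep N M₁)^[k] τ := by
  induction k with
  | zero => simp
  | succ n ih => simp only [Function.iterate_succ_apply', ih, loopStep_add]

lemma Tset_add {ρ σ : Mat} (hρ : ρ ∈ Tset N M₁) (hσ : σ ∈ Tset N M₁) :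
    ρ + σ ∈ Tset N M₁ := by
  refine ⟨hρ.1.add hσ.1, ?_⟩
  have := hρ.2.add hσ.2
  simp only [add_zero] at this
  refine Tendsto.congr (fun k => ?_) this
  rw [iter_add, Matrix.trace_add]
  simp

lemma Tset_smul {c : ℝ} (hc : 0 ≤ c) {ρ : Mat} (hρ : ρ ∈ Tset N M₁) :
    c • ρ ∈ Tset N M₁ := by
  refine ⟨psd_smul hc hρ.1, ?_⟩
  have := hρ.2.const_mul c
  simp only [mul_zero] at this
  refine Tendsto.congr (fun k => ?_) this
  rw [iter_realsmul, trace_realsmul_re]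

lemma Tset_sum {ι : Type*} (s : Finset ι) (f : ι → Mat)
    (h : ∀ i ∈ s, f i ∈ Tset N M₁) : (∑ i ∈ s, f i) ∈ Tset N M₁ := by
  classical
  induction s using Finset.induction_on with
  | empty => simpa using Tset_zero N M₁
  | @insert a s' hx ih =>
      rw [Finset.sum_insert hx]
      exact Tset_add N M₁ (h a (Finset.mem_insert_self a s'))
        (ih fun i hi => h i (Finset.mem_insert_of_mem hi))

lemma Tset_step {ρ : Mat} (hρ : ρ ∈ Tset N M₁) : loopStep N M₁ ρ ∈ Tset N M₁ := by
  refine ⟨loopStep_psd N M₁ hρ.1, ?_⟩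
  have := hρ.2.comp (tendsto_add_atTop_nat 1)
  refine Tendsto.congr (fun k => ?_) this
  simp [Function.comp, Function.iterate_succ_apply]

lemma Tset_iter {ρ : Mat} (hρ : ρ ∈ Tset N M₁) (k : ℕ) :
    (loopStep N M₁)^[k] ρ ∈ Tset N M₁ := by
  induction k with
  | zero => simpa using hρ
  | succ n ih => rw [Function.iterate_succ_apply']; exact Tset_step N M₁ ih

/-- squeeze : a PSD matrix dominated by a multiple of a terminating state terminates. -/
lemma Tset_dominated {ρ σ : Mat} (hρ : ρ ∈ Tset N M₁) (hσ : σ.PosSemidef)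
    {c : ℝ} (hdom : (c • ρ - σ).PosSemidef) : σ ∈ Tset N M₁ := by
  refine ⟨hσ, ?_⟩
  have hub : ∀ k, (((loopStep N M₁)^[k] σ).trace).re ≤ c * (((loopStep N M₁)^[k] ρ).trace).re := by
    intro k
    have h2 := psd_trace_re_nonneg (iter_mono N M₁ hdom k)
    rw [Matrix.trace_sub, Complex.sub_re, iter_realsmul, trace_realsmul_re] at h2
    linarith
  have hlb : ∀ k, 0 ≤ (((loopStep N M₁)^[k] σ).trace).re := fun k =>
    psd_trace_re_nonneg (iter_psd N M₁ hσ k)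
  have hc : Tendsto (fun k => c * (((loopStep N M₁)^[k] ρ).trace).re) atTop (nhds 0) := by
    simpa using hρ.2.const_mul c
  exact squeeze_zero hlb hub hc

/-- There is a single terminating state dominating (up to trace multiples) every
terminating state. -/
lemma exists_dominator :
    ∃ ρs ∈ Tset N M₁, ∃ C : ℝ, 0 < C ∧
      ∀ ρ ∈ Tset N M₁, ((C * ρ.trace.re) • ρs - ρ).PosSemidef := by
  classical
  set T : Set Mat := Tset N M₁ with hT
  -- T - T is a submodule containing T
  have hsub : ∀ x ∈ Submodule.span ℝ T, ∃ p ∈ T, ∃ q ∈ T, x = p - q := by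
    set S : Submodule ℝ Mat :=
      { carrier := {x | ∃ p ∈ T, ∃ q ∈ T, x = p - q}
        add_mem' := by
          rintro x y ⟨p, hp, q, hq, rfl⟩ ⟨p', hp', q', hq', rfl⟩
          exact ⟨p + p', Tset_add N M₁ hp hp', q + q', Tset_add N M₁ hq hq', by abel⟩
        zero_mem' := ⟨0, Tset_zero N M₁, 0, Tset_zero N M₁, by simp⟩
        smul_mem' := by
          rintro c x ⟨p, hp, q, hq, rfl⟩
          rcases le_or_gt 0 c with hc | hc
          · exact ⟨c • p, Tset_smul N M₁ hc hp, c • q, Tset_smul N M₁ hc hq, by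
              rw [smul_sub]⟩
          · refine ⟨(-c) • q, Tset_smul N M₁ (by linarith) hq,
              (-c) • p, Tset_smul N M₁ (by linarith) hp, by module⟩ } with hS
    intro x hx
    have : Submodule.span ℝ T ≤ S := Submodule.span_le.mpr fun ρ hρ =>
      ⟨ρ, hρ, 0, Tset_zero N M₁, by simp⟩
    exact this hx
  set W : Submodule ℝ Mat := Submodule.span ℝ T with hW
  set n : ℕ := Module.finrank ℝ W with hn
  set b : Module.Basis (Fin n) ℝ W := Module.finBasis ℝ W with hb
  choose p hp q hq hpq using fun i : Fin n => hsub (b i) (b i).2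
  set ρs : Mat := ∑ i, (p i + q i) with hρs
  have hρsT : ρs ∈ T := Tset_sum N M₁ _ _ fun i _ => Tset_add N M₁ (hp i) (hq i)
  letI : TopologicalSpace W := (inferInstance : PseudoMetricSpace W).toUniformSpace.toTopologicalSpace
  set L : Fin n → (W →L[ℝ] ℝ) :=
    fun i => LinearMap.toContinuousLinearMap (b.coord i) with hL
  set C : ℝ := (∑ i, ‖L i‖) + 1 with hC
  have hCpos : 0 < C := by
    have : 0 ≤ ∑ i, ‖L i‖ := Finset.sum_nonneg fun i _ => norm_nonneg (L i)
    linarith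
  refine ⟨ρs, hρsT, C, hCpos, ?_⟩
  intro ρ hρ
  set x : W := ⟨ρ, Submodule.subset_span hρ⟩ with hx
  set c : Fin n → ℝ := fun i => b.repr x i with hc
  have hcb : ∀ i, |c i| ≤ C * ρ.trace.re := by
    intro i
    have h1 : |c i| = ‖(L i) x‖ := by
      rw [hL]
      simp [hc, Module.Basis.coord_apply, Real.norm_eq_abs]
    have h2 : ‖(L i) x‖ ≤ ‖L i‖ * ‖x‖ := (L i).le_opNorm x
    have h3 : ‖x‖ = ‖ρ‖ := rfl
    have h4 : ‖ρ‖ ≤ ρ.trace.re := psd_norm_le_trace hρ.1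
    have h5 : ‖L i‖ ≤ C := by
      rw [hC]
      have : ‖L i‖ ≤ ∑ j, ‖L j‖ :=
        Finset.single_le_sum (f := fun j => ‖L j‖) (fun j _ => norm_nonneg (L j))
          (Finset.mem_univ i)
      linarith
    calc |c i| = ‖(L i) x‖ := h1
      _ ≤ ‖L i‖ * ‖x‖ := h2
      _ ≤ C * ρ.trace.re := by
          rw [h3]
          exact mul_le_mul h5 h4 (norm_nonneg _) hCpos.le
  have hρeq : ρ = ∑ i, c i • ((p i) - (q i)) := by
    have hrepr := b.sum_repr x
    have : ((∑ i, b.repr x i • b i : W) : Mat) = (x : Mat) := by rw [hrepr]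
    rw [hx] at this
    simp only [Submodule.coe_sum, Submodule.coe_smul] at this
    rw [← this]
    exact Finset.sum_congr rfl fun i _ => by rw [hpq i]
  have hkey : (C * ρ.trace.re) • ρs - ρ
      = ∑ i, ((C * ρ.trace.re - c i) • (p i) + (C * ρ.trace.re + c i) • (q i)) := by
    rw [hρeq, hρs, Finset.smul_sum, ← Finset.sum_sub_distrib]
    refine Finset.sum_congr rfl fun i _ => ?_
    rw [smul_add, smul_sub, sub_smul, add_smul]
    abel
  rw [hkey]
  refine psd_sum _ _ fun i _ => ?_
  have habs := hcb i
  rw [abs_le] at habs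
  exact (psd_smul (by linarith [habs.2]) (hp i).1).add (psd_smul (by linarith [habs.1]) (hq i).1)

lemma trace_step_eq (hN : ∑ i, (N i)ᴴ * N i = 1) (hM : M₀ᴴ * M₀ + M₁ᴴ * M₁ = 1) (σ : Mat) :
    (loopStep N M₁ σ).trace = σ.trace - (M₀ * σ * M₀ᴴ).trace := by
  rw [trace_loopStep N M₁ hN, eq_sub_iff_add_eq, add_comm]
  exact trace_split M₀ M₁ hM σ

lemma trace_iter_succ_re (hN : ∑ i, (N i)ᴴ * N i = 1) (hM : M₀ᴴ * M₀ + M₁ᴴ * M₁ = 1)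
    (ρ : Mat) (k : ℕ) :
    (((loopStep N M₁)^[k + 1] ρ).trace).re
      = (((loopStep N M₁)^[k] ρ).trace).re
        - ((M₀ * ((loopStep N M₁)^[k] ρ) * M₀ᴴ).trace).re := by
  rw [Function.iterate_succ_apply', trace_step_eq N M₀ M₁ hN hM, Complex.sub_re]

lemma trace_iter_antitone (hN : ∑ i, (N i)ᴴ * N i = 1) (hM : M₀ᴴ * M₀ + M₁ᴴ * M₁ = 1)
    {ρ : Mat} (hρ : ρ.PosSemidef) :
    Antitone fun k => (((loopStep N M₁)^[k] ρ).trace).re := by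
  refine antitone_nat_of_succ_le fun k => ?_
  rw [trace_iter_succ_re N M₀ M₁ hN hM]
  have : 0 ≤ ((M₀ * ((loopStep N M₁)^[k] ρ) * M₀ᴴ).trace).re :=
    psd_trace_re_nonneg ((iter_psd N M₁ hρ k).mul_mul_conjTranspose_same M₀)
  linarith

/-- a uniform halving time for all terminating states. -/
lemma exists_halver :
    ∃ k₀ : ℕ, 0 < k₀ ∧ ∀ σ ∈ Tset N M₁,
      (((loopStep N M₁)^[k₀] σ).trace).re ≤ (1 / 2) * σ.trace.re := by
  obtain ⟨ρs, hρsT, C, hC, hdom⟩ := exists_dominator N M₁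
  have hev : ∀ᶠ k in atTop, (((loopStep N M₁)^[k] ρs).trace).re < 1 / (2 * C) :=
    hρsT.2.eventually_lt_const (by positivity)
  obtain ⟨k₁, hk₁⟩ := hev.exists_forall_of_atTop
  refine ⟨k₁ + 1, Nat.succ_pos _, fun σ hσ => ?_⟩
  have hσtr : 0 ≤ σ.trace.re := psd_trace_re_nonneg hσ.1
  have h1 := iter_mono N M₁ (hdom σ hσ) (k₁ + 1)
  have h2 := psd_trace_re_nonneg h1
  rw [Matrix.trace_sub, Complex.sub_re, iter_realsmul, trace_realsmul_re] at h2
  have h3 : (((loopStep N M₁)^[k₁+1] ρs).trace).re ≤ 1 / (2 * C) :=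
    (hk₁ (k₁ + 1) (Nat.le_succ _)).le
  have h4 : 0 ≤ (((loopStep N M₁)^[k₁+1] ρs).trace).re :=
    psd_trace_re_nonneg (iter_psd N M₁ hρsT.1 _)
  have h5 : C * σ.trace.re * (((loopStep N M₁)^[k₁+1] ρs).trace).re
      ≤ C * σ.trace.re * (1 / (2 * C)) :=
    mul_le_mul_of_nonneg_left h3 (by positivity)
  have h6 : C * σ.trace.re * (1 / (2 * C)) = (1 / 2) * σ.trace.re := by
    field_simp
  linarith

/-- geometric decay of the trace along terminating states. -/
lemma trace_iter_decay (hN : ∑ i, (N i)ᴴ * N i = 1) (hM : M₀ᴴ * M₀ + M₁ᴴ * M₁ = 1)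
    {k₀ : ℕ} (hhalf : ∀ σ ∈ Tset N M₁,
      (((loopStep N M₁)^[k₀] σ).trace).re ≤ (1 / 2) * σ.trace.re)
    {ρ : Mat} (hρ : ρ ∈ Tset N M₁) :
    ∀ n k, n * k₀ ≤ k →
      (((loopStep N M₁)^[k] ρ).trace).re ≤ ρ.trace.re * (1 / 2) ^ n := by
  intro n
  induction n with
  | zero =>
      intro k _
      simpa using (trace_iter_antitone N M₀ M₁ hN hM hρ.1 (Nat.zero_le k)).trans
        (by simp)
  | succ t ih =>
      intro k hk
      have hk' : t * k₀ + k₀ ≤ k := by rw [Nat.succ_mul] at hk; exact hk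
      have hk₀k : k₀ ≤ k := by omega
      have hsplit : (loopStep N M₁)^[k] ρ
          = (loopStep N M₁)^[k₀] ((loopStep N M₁)^[k - k₀] ρ) := by
        rw [← Function.iterate_add_apply]
        congr 1
        omega
      have hmem : (loopStep N M₁)^[k - k₀] ρ ∈ Tset N M₁ := Tset_iter N M₁ hρ _
      have h1 := hhalf _ hmem
      rw [← hsplit] at h1
      have h2 : (((loopStep N M₁)^[k - k₀] ρ).trace).re ≤ ρ.trace.re * (1 / 2) ^ t := by
        exact ih (k - k₀) (by omega)
      calc (((loopStep N M₁)^[k] ρ).trace).re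
          ≤ (1 / 2) * (((loopStep N M₁)^[k - k₀] ρ).trace).re := h1
        _ ≤ (1 / 2) * (ρ.trace.re * (1 / 2) ^ t) := by linarith
        _ = ρ.trace.re * (1 / 2) ^ (t + 1) := by ring

lemma geom_nat_div_sum_le {k₀ : ℕ} (hk₀ : 0 < k₀) (M : ℕ) :
    ∑ k ∈ Finset.range M, ((1 : ℝ) / 2) ^ (k / k₀) ≤ 2 * k₀ := by
  have key : ∀ t : ℕ, ∑ k ∈ Finset.range (k₀ * t), ((1 : ℝ) / 2) ^ (k / k₀)
      = k₀ * ∑ i ∈ Finset.range t, ((1 : ℝ) / 2) ^ i := by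
    intro t
    induction t with
    | zero => simp
    | succ u ih =>
        have hr : Finset.range (k₀ * (u + 1))
            = Finset.Ico 0 (k₀ * u) ∪ Finset.Ico (k₀ * u) (k₀ * (u + 1)) := by
          rw [Finset.Ico_union_Ico_eq_Ico (Nat.zero_le _) (by nlinarith), ← Finset.range_eq_Ico]
        rw [hr, Finset.sum_union (by
          simp [Finset.disjoint_left]
          intro a h1 h2
          omega)]
        rw [← Finset.range_eq_Ico, ih]
        have hblock : ∑ k ∈ Finset.Ico (k₀ * u) (k₀ * (u + 1)), ((1 : ℝ) / 2) ^ (k / k₀)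
            = k₀ * ((1 : ℝ) / 2) ^ u := by
          rw [Finset.sum_Ico_eq_sum_range]
          have hlen : k₀ * (u + 1) - k₀ * u = k₀ := by ring_nf; omega
          rw [hlen]
          have : ∀ j ∈ Finset.range k₀, ((1 : ℝ) / 2) ^ ((k₀ * u + j) / k₀) = ((1:ℝ)/2) ^ u := by
            intro j hj
            congr 1
            rw [Nat.mul_add_div hk₀, Nat.div_eq_of_lt (Finset.mem_range.mp hj)]
            omega
          rw [Finset.sum_congr rfl this]
          simp [mul_comm]
        rw [hblock, Finset.sum_range_succ]
        ring
  have h1 : ∑ k ∈ Finset.range M, ((1 : ℝ) / 2) ^ (k / k₀)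
      ≤ ∑ k ∈ Finset.range (k₀ * M), ((1 : ℝ) / 2) ^ (k / k₀) := by
    refine Finset.sum_le_sum_of_subset_of_nonneg ?_ fun k _ _ => by positivity
    exact Finset.range_subset_range.mpr (Nat.le_mul_of_pos_left M hk₀)
  refine h1.trans ?_
  rw [key M]
  have h2 : ∑ i ∈ Finset.range M, ((1 : ℝ) / 2) ^ i ≤ 2 := by
    simpa using sum_geometric_two_le M
  have : (0:ℝ) ≤ k₀ := by positivity
  nlinarith

/-- summability of weighted traces along terminating states. -/
lemma summable_weighted (hN : ∑ i, (N i)ᴴ * N i = 1) (hM : M₀ᴴ * M₀ + M₁ᴴ * M₁ = 1)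
    (G : Mat) (hG : G.PosSemidef) {ρ : Mat} (hρ : ρ ∈ Tset N M₁) :
    Summable (fun k => ((G * ((loopStep N M₁)^[k] ρ)).trace).re) := by
  obtain ⟨k₀, hk₀, hhalf⟩ := exists_halver N M₁
  set cG : ℝ := ∑ i, ∑ j, ‖G i j‖ with hcG
  have hcG0 : 0 ≤ cG :=
    Finset.sum_nonneg fun i _ => Finset.sum_nonneg fun j _ => norm_nonneg _
  have htr0 : 0 ≤ ρ.trace.re := psd_trace_re_nonneg hρ.1
  refine summable_of_sum_range_le (c := cG * ρ.trace.re * (2 * k₀))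
    (fun k => trace_mul_psd_nonneg hG (iter_psd N M₁ hρ.1 k)) fun M => ?_
  have hb : ∀ k, ((G * ((loopStep N M₁)^[k] ρ)).trace).re
      ≤ cG * ρ.trace.re * ((1 : ℝ) / 2) ^ (k / k₀) := by
    intro k
    have h1 := trace_mul_re_le (G := G) (iter_psd N M₁ hρ.1 k)
    have h2 := trace_iter_decay N M₀ M₁ hN hM hhalf hρ (k / k₀) k (Nat.div_mul_le_self k k₀)
    calc ((G * ((loopStep N M₁)^[k] ρ)).trace).re
        ≤ cG * (((loopStep N M₁)^[k] ρ).trace).re := h1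
      _ ≤ cG * (ρ.trace.re * ((1 : ℝ) / 2) ^ (k / k₀)) :=
          mul_le_mul_of_nonneg_left h2 hcG0
      _ = cG * ρ.trace.re * ((1 : ℝ) / 2) ^ (k / k₀) := by ring
  calc ∑ k ∈ Finset.range M, ((G * ((loopStep N M₁)^[k] ρ)).trace).re
      ≤ ∑ k ∈ Finset.range M, cG * ρ.trace.re * ((1 : ℝ) / 2) ^ (k / k₀) :=
        Finset.sum_le_sum fun k _ => hb k
    _ = cG * ρ.trace.re * ∑ k ∈ Finset.range M, ((1 : ℝ) / 2) ^ (k / k₀) := by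
        rw [Finset.mul_sum]
    _ ≤ cG * ρ.trace.re * (2 * k₀) :=
        mul_le_mul_of_nonneg_left (geom_nat_div_sum_le hk₀ M) (by positivity)

end Terminating

section BMatrix

/-- `X ↦ re (tr (X ρ'))` as a continuous linear map. -/
noncomputable def traceReCLM (ρ' : Mat) : Mat →L[ℝ] ℝ :=
  LinearMap.toContinuousLinearMap
    { toFun := fun X => ((X * ρ').trace).re
      map_add' := by
        intro X Y
        rw [Matrix.add_mul, Matrix.trace_add, Complex.add_re]
      map_smul' := by
        intro c X
        rw [Matrix.smul_mul, Matrix.trace_smul, Complex.smul_re]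
        rfl }

@[simp] lemma traceReCLM_apply (ρ' X : Mat) : traceReCLM ρ' X = ((X * ρ').trace).re := rfl

/-- conjugate transposition as a continuous (real-)linear map. -/
noncomputable def conjTransposeCLM : Mat →L[ℝ] Mat :=
  LinearMap.toContinuousLinearMap
    { toFun := fun X => Xᴴ
      map_add' := by
        intro X Y
        rw [Matrix.conjTranspose_add]
      map_smul' := by
        intro c X
        rw [real_smul_eq, Matrix.conjTranspose_smul, real_smul_eq]
        simp [Complex.star_def, Complex.conj_ofReal] }

@[simp] lemma conjTransposeCLM_apply (X : Mat) : (conjTransposeCLM (d := d)) X = Xᴴ := rfl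

lemma herm_dotProduct_star {X : Mat} (hX : Xᴴ = X) (x : Fin d → ℂ) :
    star (star x ⬝ᵥ X *ᵥ x) = star x ⬝ᵥ X *ᵥ x := by
  conv_lhs => rw [Matrix.star_dotProduct, star_star]
  rw [Matrix.star_mulVec, hX, ← Matrix.dotProduct_mulVec]

variable (N : Fin m → Matrix (Fin d) (Fin d) ℂ) (M₀ M₁ : Matrix (Fin d) (Fin d) ℂ)

/-- The runtime observable for a PSD weight `G`: a single PSD matrix `B` representing
`ρ ↦ ∑ₖ tr (G ℰᵏ(ρ))` on all terminating states. -/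
lemma exists_runtime_matrix (hd : 1 ≤ d) (hN : ∑ i, (N i)ᴴ * N i = 1)
    (hM : M₀ᴴ * M₀ + M₁ᴴ * M₁ = 1) (G : Mat) (hG : G.PosSemidef) :
    ∃ B : Mat, B.PosSemidef ∧ ∀ ρ ∈ Tset N M₁,
      ∑' k : ℕ, ((G * ((loopStep N M₁)^[k] ρ)).trace).re = ((B * ρ).trace).re := by
  obtain ⟨ρs, hρsT, C, hC, hdom⟩ := exists_dominator N M₁
  obtain ⟨Q, lam, hQpsd, hQH, hQQ, hQρs, hρsQ, hlam, hgap⟩ := exists_support_proj hd hρsT.1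
  -- `Q` is itself a terminating state
  have hQT : Q ∈ Tset N M₁ := by
    refine Tset_dominated N M₁ hρsT hQpsd (c := lam⁻¹) ?_
    have h1 := psd_smul (c := lam⁻¹) (by positivity) hgap
    have h2 : lam⁻¹ • (ρs - (lam : ℂ) • Q) = lam⁻¹ • ρs - Q := by
      rw [smul_sub]
      congr 1
      rw [real_smul_eq, smul_smul, ← Complex.ofReal_mul, inv_mul_cancel₀ (ne_of_gt hlam)]
      simp
    rwa [h2] at h1
  set F : ℕ → Mat := fun k => (dualStep N M₁)^[k] G with hF
  have hFpsd : ∀ k, (F k).PosSemidef := fun k => dual_iter_psd N M₁ hG k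
  set D : ℕ → Mat := fun k => Q * F k * Q with hD
  have hDpsd : ∀ k, (D k).PosSemidef := fun k => by
    have := (hFpsd k).mul_mul_conjTranspose_same Q
    rwa [hQH] at this
  have hDherm : ∀ k, (D k)ᴴ = D k := by
    intro k
    show (Q * F k * Q)ᴴ = Q * F k * Q
    rw [Matrix.conjTranspose_mul, Matrix.conjTranspose_mul, hQH, (hFpsd k).1.eq,
      Matrix.mul_assoc]
  have hDtr : ∀ (k : ℕ) (σ : Mat), (D k * σ).trace = (F k * (Q * σ * Q)).trace := by
    intro k σ
    show (Q * F k * Q * σ).trace = _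
    rw [Matrix.trace_mul_cycle (A := Q * F k) (B := Q) (C := σ),
      Matrix.trace_mul_cycle (A := σ) (B := Q * F k) (C := Q),
      ← Matrix.mul_assoc, Matrix.trace_mul_comm]
  have hDtrace : ∀ k, (D k).trace = (G * ((loopStep N M₁)^[k] Q)).trace := by
    intro k
    show (Q * F k * Q).trace = _
    rw [Matrix.trace_mul_comm, ← Matrix.mul_assoc, hQQ, Matrix.trace_mul_comm]
    simpa only [hF] using dual_iter_trace N M₁ G Q k
  have hsumQ : Summable (fun k => ((G * ((loopStep N M₁)^[k] Q)).trace).re) :=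
    summable_weighted N M₀ M₁ hN hM G hG hQT
  have hnorm : ∀ k, ‖D k‖ ≤ ((G * ((loopStep N M₁)^[k] Q)).trace).re := by
    intro k
    have h1 := psd_norm_le_trace (hDpsd k)
    rwa [hDtrace k] at h1
  have hDsummable : Summable D :=
    Summable.of_norm (Summable.of_nonneg_of_le (fun k => norm_nonneg _) hnorm hsumQ)
  set B : Mat := ∑' k, D k with hB
  -- B is Hermitian
  have hBH : Bᴴ = B := by
    have h1 : (conjTransposeCLM (d := d)) B = ∑' k, (conjTransposeCLM (d := d)) (D k) :=
      ContinuousLinearMap.map_tsum _ hDsummable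
    simp only [conjTransposeCLM_apply] at h1
    rw [hB, h1]
    exact tsum_congr fun k => hDherm k
  -- trace against any state commutes with the sum
  have hBtr : ∀ ρ' : Mat, ((B * ρ').trace).re = ∑' k, ((D k * ρ').trace).re := by
    intro ρ'
    have h1 : (traceReCLM ρ') B = ∑' k, (traceReCLM ρ') (D k) :=
      ContinuousLinearMap.map_tsum _ hDsummable
    simpa only [traceReCLM_apply] using h1
  -- B is PSD
  have hBpsd : B.PosSemidef := by
    refine Matrix.PosSemidef.of_dotProduct_mulVec_nonneg hBH fun x => ?_
    have him := herm_dotProduct_star hBH x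
    have hre : 0 ≤ (star x ⬝ᵥ B *ᵥ x).re := by
      rw [dotProduct_eq_trace, hBtr]
      refine tsum_nonneg fun k => ?_
      exact trace_mul_psd_nonneg (hDpsd k) (psd_vecMulVec x)
    rw [Complex.nonneg_iff]
    refine ⟨hre, ?_⟩
    exact ((Complex.conj_eq_iff_im).mp (by rw [← Complex.star_def]; exact him)).symm
  -- terminating states are supported inside Q
  have hQfix : ∀ ρ, ρ ∈ Tset N M₁ → Q * ρ * Q = ρ := by
    intro ρ hρ
    have hρpsd := hρ.1
    have hc'0 : 0 ≤ C * ρ.trace.re := mul_nonneg hC.le (psd_trace_re_nonneg hρpsd)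
    have hdomρ := hdom ρ hρ
    obtain ⟨R1, hR1⟩ : ∃ R1 : Mat, R1 = 1 - Q := ⟨_, rfl⟩
    have hR1H : R1ᴴ = R1 := by
      rw [hR1, Matrix.conjTranspose_sub, Matrix.conjTranspose_one, hQH]
    have hRρsR : R1 * ρs * R1 = 0 := by
      rw [hR1, Matrix.sub_mul, Matrix.one_mul, hQρs, sub_self, Matrix.zero_mul]
    have hX : (R1 * ((C * ρ.trace.re) • ρs - ρ) * R1).PosSemidef := by
      have := hdomρ.mul_mul_conjTranspose_same R1
      rwa [hR1H] at this
    have hXeq : R1 * ((C * ρ.trace.re) • ρs - ρ) * R1 = - (R1 * ρ * R1) := by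
      rw [Matrix.mul_sub, Matrix.sub_mul, Matrix.mul_smul, Matrix.smul_mul, hRρsR, smul_zero,
        zero_sub]
    have hY : (R1 * ρ * R1).PosSemidef := by
      have := hρpsd.mul_mul_conjTranspose_same R1
      rwa [hR1H] at this
    have hzero : ∀ x : Fin d → ℂ, ρ *ᵥ (R1 *ᵥ x) = 0 := by
      intro x
      have h1 : 0 ≤ star x ⬝ᵥ (R1 * ρ * R1) *ᵥ x := hY.dotProduct_mulVec_nonneg x
      have h2 : 0 ≤ star x ⬝ᵥ (- (R1 * ρ * R1)) *ᵥ x := by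
        rw [← hXeq]; exact hX.dotProduct_mulVec_nonneg x
      have h3 : star x ⬝ᵥ (- (R1 * ρ * R1)) *ᵥ x = - (star x ⬝ᵥ (R1 * ρ * R1) *ᵥ x) := by
        rw [Matrix.neg_mulVec, dotProduct_neg]
      have h4 : star x ⬝ᵥ (R1 * ρ * R1) *ᵥ x = 0 :=
        le_antisymm (neg_nonneg.mp (h3 ▸ h2)) h1
      have h5 : star x ⬝ᵥ (R1 * ρ * R1) *ᵥ x = star (R1 *ᵥ x) ⬝ᵥ ρ *ᵥ (R1 *ᵥ x) := by
        rw [Matrix.star_mulVec, hR1H, ← Matrix.dotProduct_mulVec,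
          Matrix.mulVec_mulVec, Matrix.mulVec_mulVec]
      rw [h5] at h4
      exact (hρpsd.dotProduct_mulVec_zero_iff (R1 *ᵥ x)).mp h4
    have hmat : ρ * R1 = 0 := by
      ext i j
      have h6 := congrFun (hzero (Pi.single j 1)) i
      rw [Matrix.mulVec_mulVec, Matrix.mulVec_single] at h6
      simpa using h6
    have hρQ : ρ * Q = ρ := by
      have h7 : ρ * (1 - Q) = 0 := hR1 ▸ hmat
      rw [Matrix.mul_sub, Matrix.mul_one, sub_eq_zero] at h7
      exact h7.symm
    have hQρ : Q * ρ = ρ := by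
      have h8 : Q * ρ = (ρᴴ * Qᴴ)ᴴ := by
        rw [Matrix.conjTranspose_mul, Matrix.conjTranspose_conjTranspose,
          Matrix.conjTranspose_conjTranspose]
      rw [h8, hρpsd.1.eq, hQH, hρQ, hρpsd.1.eq]
    rw [hQρ, hρQ]
  -- final identity
  refine ⟨B, hBpsd, fun ρ hρ => ?_⟩
  rw [hBtr ρ]
  refine tsum_congr fun k => ?_
  have h9 : (D k * ρ).trace = (G * ((loopStep N M₁)^[k] ρ)).trace := by
    rw [hDtr k ρ, hQfix ρ hρ]
    simpa only [hF] using dual_iter_trace N M₁ G ρ k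
  rw [h9]

end BMatrix

end QRT

/-- Observable representation of the expected runtime of a quantum while-loop:
there is a single positive operator `B` such that on every almost-surely-terminating
input `ρ`, the expected runtime equals `tr(B ρ)`. -/
theorem runtime_observable_of_loop
    (d m : ℕ) (hd : 1 ≤ d) (hm : 1 ≤ m)
    (N : Fin m → Matrix (Fin d) (Fin d) ℂ)
    (hN : ∑ i, (N i)ᴴ * N i = 1)
    (M₀ M₁ : Matrix (Fin d) (Fin d) ℂ)
    (hM : M₀ᴴ * M₀ + M₁ᴴ * M₁ = 1)
    (A : Matrix (Fin d) (Fin d) ℂ) (hA : A.PosSemidef) :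
    ∃ B : Matrix (Fin d) (Fin d) ℂ, B.PosSemidef ∧
      ∀ ρ : Matrix (Fin d) (Fin d) ℂ, ρ.PosSemidef →
        (∑' k : ℕ, ((M₀ * ((loopStep N M₁)^[k] ρ) * M₀ᴴ).trace).re = ρ.trace.re) →
        Summable (fun k : ℕ => (((loopStep N M₁)^[k] ρ).trace).re) ∧
        Summable (fun k : ℕ =>
          ((A * (M₁ * ((loopStep N M₁)^[k] ρ) * M₁ᴴ)).trace).re) ∧
        (∑' k : ℕ, (((loopStep N M₁)^[k] ρ).trace).re) +
            (∑' k : ℕ, ((A * (M₁ * ((loopStep N M₁)^[k] ρ) * M₁ᴴ)).trace).re)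
          = ((B * ρ).trace).re := by
  classical
  have hG2 : (M₁ᴴ * A * M₁).PosSemidef := hA.conjTranspose_mul_mul_same M₁
  have hG : (1 + M₁ᴴ * A * M₁).PosSemidef := Matrix.PosSemidef.one.add hG2
  obtain ⟨B, hBpsd, hBrep⟩ := QRT.exists_runtime_matrix N M₀ M₁ hd hN hM _ hG
  refine ⟨B, hBpsd, ?_⟩
  intro ρ hρ hterm
  -- cyclicity for the second series
  have cyc : ∀ σ : Matrix (Fin d) (Fin d) ℂ,
      (A * (M₁ * σ * M₁ᴴ)).trace = ((M₁ᴴ * A * M₁) * σ).trace := by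
    intro σ
    rw [Matrix.trace_mul_comm, Matrix.mul_assoc (M₁ * σ),
      Matrix.trace_mul_comm (M₁ * σ) (M₁ᴴ * A), ← Matrix.mul_assoc]
  -- the input is a terminating state
  have hTmem : ρ ∈ QRT.Tset N M₁ := by
    refine ⟨hρ, ?_⟩
    have hg0 : ∀ k, 0 ≤ ((M₀ * ((loopStep N M₁)^[k] ρ) * M₀ᴴ).trace).re := fun k =>
      QRT.psd_trace_re_nonneg ((QRT.iter_psd N M₁ hρ k).mul_mul_conjTranspose_same M₀)
    have ht0 : ∀ k, 0 ≤ (((loopStep N M₁)^[k] ρ).trace).re := fun k =>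
      QRT.psd_trace_re_nonneg (QRT.iter_psd N M₁ hρ k)
    have hpartial : ∀ K, ∑ k ∈ Finset.range K,
        ((M₀ * ((loopStep N M₁)^[k] ρ) * M₀ᴴ).trace).re
          = ρ.trace.re - (((loopStep N M₁)^[K] ρ).trace).re := by
      intro K
      induction K with
      | zero => simp
      | succ L ih =>
          rw [Finset.sum_range_succ, ih, QRT.trace_iter_succ_re N M₀ M₁ hN hM ρ L]
          ring
    have hgsummable : Summable
        (fun k => ((M₀ * ((loopStep N M₁)^[k] ρ) * M₀ᴴ).trace).re) :=
      summable_of_sum_range_le hg0 (fun K => by rw [hpartial]; have := ht0 K; linarith)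
    have hhas : HasSum (fun k => ((M₀ * ((loopStep N M₁)^[k] ρ) * M₀ᴴ).trace).re)
        ρ.trace.re := by
      have h1 := hgsummable.hasSum
      rwa [hterm] at h1
    have h2 := hhas.tendsto_sum_nat
    have h3 := tendsto_const_nhds (x := ρ.trace.re) (f := Filter.atTop (α := ℕ)) |>.sub h2
    rw [sub_self] at h3
    refine h3.congr fun K => ?_
    rw [hpartial]
    ring
  -- the two series
  have hs1 : Summable (fun k : ℕ => (((loopStep N M₁)^[k] ρ).trace).re) := by
    have := QRT.summable_weighted N M₀ M₁ hN hM 1 Matrix.PosSemidef.one hTmem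
    refine this.congr fun k => ?_
    rw [Matrix.one_mul]
  have hs2' : Summable (fun k : ℕ =>
      (((M₁ᴴ * A * M₁) * ((loopStep N M₁)^[k] ρ)).trace).re) :=
    QRT.summable_weighted N M₀ M₁ hN hM _ hG2 hTmem
  have hs2 : Summable (fun k : ℕ =>
      ((A * (M₁ * ((loopStep N M₁)^[k] ρ) * M₁ᴴ)).trace).re) := by
    refine hs2'.congr fun k => ?_
    rw [cyc]
  refine ⟨hs1, hs2, ?_⟩
  calc (∑' k : ℕ, (((loopStep N M₁)^[k] ρ).trace).re) +
        (∑' k : ℕ, ((A * (M₁ * ((loopStep N M₁)^[k] ρ) * M₁ᴴ)).trace).re)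
      = ∑' k : ℕ, ((((loopStep N M₁)^[k] ρ).trace).re +
          ((A * (M₁ * ((loopStep N M₁)^[k] ρ) * M₁ᴴ)).trace).re) := (Summable.tsum_add hs1 hs2).symm
    _ = ∑' k : ℕ, (((1 + M₁ᴴ * A * M₁) * ((loopStep N M₁)^[k] ρ)).trace).re := by
        refine tsum_congr fun k => ?_
        rw [Matrix.add_mul, Matrix.one_mul, Matrix.trace_add, Complex.add_re, cyc]
    _ = ((B * ρ).trace).re := hBrep ρ hTmem
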